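/- Let G be a (2P_2, \overline{P_2+P_3})-free atom containing an induced 5-cycle on vertices v_1,…,v_5. Then for every i ∈ {1,…,5} (indices modulo 5), the set V_∅ ∪ V_{{i,i+2}} is an independent set of G. -/

import Mathlib

open SimpleGraph

/-- The graph `2P₂`: two disjoint edges, on vertex set `Fin 4`. -/
def twoP2 : SimpleGraph (Fin 4) :=
  SimpleGraph.fromRel (fun a b => (a = 0 ∧ b = 1) ∨ (a = 2 ∧ b = 3))

/-- The graph `P₂ + P₃`: disjoint union of a path on 2 vertices (0-1)
and a path on 3 vertices (2-3-4), on vertex set `Fin 5`. -/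
def P2P3 : SimpleGraph (Fin 5) :=
  SimpleGraph.fromRel (fun a b => (a = 0 ∧ b = 1) ∨ (a = 2 ∧ b = 3) ∨ (a = 3 ∧ b = 4))

/-- `G` is `H`-free: `G` contains no induced subgraph isomorphic to `H`. -/
def Free {W V : Type*} (H : SimpleGraph W) (G : SimpleGraph V) : Prop :=
  IsEmpty (H ↪g G)

/-- `G` has no clique cut-set: for every clique `K`, deleting the vertices of `K`
does not disconnect the graph.  A graph with this property is called an atom. -/
def NoCliqueCutset {V : Type*} (G : SimpleGraph V) : Prop :=
  ∀ K : Set V, G.IsClique K → (G.induce (Kᶜ : Set V)).Preconnected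

/-- For `S ⊆ Fin 5`, the set of vertices `x` outside the cycle `v 0, …, v 4` whose
neighbourhood on the cycle is exactly `{v i : i ∈ S}`. -/
def vSet {V : Type*} (G : SimpleGraph V) (v : Fin 5 → V) (S : Set (Fin 5)) : Set V :=
  {x | (∀ i, x ≠ v i) ∧ ∀ i, (G.Adj x (v i) ↔ i ∈ S)}

theorem clm_C5_V0_V13_indep {V : Type*} [Fintype V] (G : SimpleGraph V)
    (hfree1 : _root_.Free twoP2 G) (hfree2 : _root_.Free (P2P3ᶜ) G)
    (hatom : NoCliqueCutset G)
    (v : Fin 5 → V) (hv : Function.Injective v)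
    (hC : ∀ i j : Fin 5, G.Adj (v i) (v j) ↔ (j = i + 1 ∨ i = j + 1)) :
    ∀ i : Fin 5, ∀ x ∈ vSet G v ∅ ∪ vSet G v {i, i + 2},
      ∀ y ∈ vSet G v ∅ ∪ vSet G v {i, i + 2}, x ≠ y → ¬ G.Adj x y := by
  intro i x hx y hy hxy hadj
  have hfacts : ∀ j : Fin 5, j+3 ≠ j ∧ j+3 ≠ j+2 ∧ j+4 ≠ j ∧ j+4 ≠ j+2 ∧
      j+4 = (j+3)+1 ∧ j+3 ≠ j+4 := by decide
  have key : ∀ z ∈ vSet G v ∅ ∪ vSet G v {i, i+2},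
      (∀ k, z ≠ v k) ∧ ¬ G.Adj z (v (i+3)) ∧ ¬ G.Adj z (v (i+4)) := by
    rintro z (⟨hz1, hz2⟩ | ⟨hz1, hz2⟩)
    · exact ⟨hz1, by simp [hz2 (i+3)], by simp [hz2 (i+4)]⟩
    · refine ⟨hz1, ?_, ?_⟩
      · rw [hz2 (i+3)]
        simp only [Set.mem_insert_iff, Set.mem_singleton_iff]
        push_neg
        exact ⟨(hfacts i).1, (hfacts i).2.1⟩
      · rw [hz2 (i+4)]
        simp only [Set.mem_insert_iff, Set.mem_singleton_iff]
        push_neg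
        exact ⟨(hfacts i).2.2.1, (hfacts i).2.2.2.1⟩
  obtain ⟨hxv, hx3, hx4⟩ := key x hx
  obtain ⟨hyv, hy3, hy4⟩ := key y hy
  have hadj34 : G.Adj (v (i+3)) (v (i+4)) := by
    rw [hC]; left; exact (hfacts i).2.2.2.2.1
  have hv34 : v (i+3) ≠ v (i+4) := fun h => (hfacts i).2.2.2.2.2 (hv h)
  have ne2 := hxv (i+3)
  have ne3 := hxv (i+4)
  have ne4 := hyv (i+3)
  have ne5 := hyv (i+4)
  have ne2' := ne2.symm
  have ne3' := ne3.symm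
  have ne4' := ne4.symm
  have ne5' := ne5.symm
  have hxy' := fun h => hxy (Eq.symm h)
  have hv34' := fun h => hv34 (Eq.symm h)
  apply hfree1.false
  refine ⟨⟨![x, y, v (i+3), v (i+4)], ?_⟩, ?_⟩
  · intro a b hab
    clear key hfacts hx hy hC hatom hfree2
    fin_cases a <;> fin_cases b <;> simp_all
  · intro a b
    erw [Function.Embedding.coeFn_mk]
    have hadj' := hadj.symm
    have hx3' := fun h => hx3 (G.adj_symm h)
    have hx4' := fun h => hx4 (G.adj_symm h)
    have hy3' := fun h => hy3 (G.adj_symm h)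
    have hy4' := fun h => hy4 (G.adj_symm h)
    have hadj34' := hadj34.symm
    clear key hfacts hx hy hC hatom hfree2
    fin_cases a <;> fin_cases b <;>
      simp_all [twoP2, SimpleGraph.fromRel_adj]
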